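/- For every n ≥ 4, the number of distinct collections of 4-element subsets of {0,1,…,n} that arise as {σ(F) : F a facet of S(I)} for some permutation σ of {0,1,…,n} and some order ideal I' of F₃(n) with max ⋃ I' = n (where I = {{0} ∪ f : f ∈ I'}) is at most 2^{n−4}·(n+1)!. That is, there are at most 2^{n−4}·(n+1)! squeezed 3-spheres with n+1 labeled vertices. -/

import Mathlib

/-- The 4-element set `{i, i+1, j, j+1}`, denoted `(i,j)` in the paper. -/
def pairSet (i j : ℕ) : Finset ℕ := {i, i + 1, j, j + 1}

/-- Membership in the collection `F₃(n)` of 4-element subsets of `{1,…,n}`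
of the form `{i, i+1, j, j+1}` with `1 ≤ i`, `i+2 ≤ j`, `j+1 ≤ n`. -/
def memF3 (n : ℕ) (f : Finset ℕ) : Prop :=
  ∃ i j : ℕ, 1 ≤ i ∧ i + 2 ≤ j ∧ j + 1 ≤ n ∧ f = pairSet i j

/-- The partial order `⪯` on finite subsets of `ℕ` of equal cardinality:
componentwise comparison of the increasingly sorted lists of elements. -/
def squeezedLE (f g : Finset ℕ) : Prop :=
  List.Forall₂ (· ≤ ·) (f.sort (· ≤ ·)) (g.sort (· ≤ ·))

/-- `I` is an order ideal of `F₃(n)` w.r.t. `⪯`. -/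
def IsIdealF3 (n : ℕ) (I : Set (Finset ℕ)) : Prop :=
  (∀ f ∈ I, memF3 n f) ∧
  ∀ f g : Finset ℕ, memF3 n f → g ∈ I → squeezedLE f g → f ∈ I

/-- `max ⋃ I`, the largest vertex used by the collection `I`. -/
noncomputable def maxVertex (I : Set (Finset ℕ)) : ℕ :=
  sSup (⋃ f ∈ I, (f : Set ℕ))

/-- `0 * K = {{0} ∪ f : f ∈ K}`. -/
def coneZero (K : Set (Finset ℕ)) : Set (Finset ℕ) := (insert 0) '' K

/-- A facet of the squeezed sphere `S(I)`: a 4-element set contained in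
exactly one member of `I`. -/
def isFacetOfS (I : Set (Finset ℕ)) (F : Finset ℕ) : Prop :=
  F.card = 4 ∧ ∃! g, g ∈ I ∧ F ⊆ g

/-- The gap of `(i,j) = {i, i+1, j, j+1}`, i.e. `j - i - 2`. -/
def gapOf (f : Finset ℕ) : ℕ :=
  f.sup id - (f.sort (· ≤ ·)).headI - 3

/-- The collections of 4-element subsets of `{0,…,n}` arising as the relabeled
facet set `{σ(F) : F a facet of S(I)}` of a squeezed 3-sphere `S(I)`, for some
permutation `σ` of `{0,…,n}` and some order ideal `I'` of `F₃(n)` with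
`max ⋃ I' = n` (and `I = 0 * I'`). -/
def labeledSqueezedSpheres (n : ℕ) : Set (Set (Finset ℕ)) :=
  {C | ∃ (I' : Set (Finset ℕ)) (σ : Equiv.Perm ℕ),
    IsIdealF3 n I' ∧ maxVertex I' = n ∧ (∀ x : ℕ, x ≤ n → σ x ≤ n) ∧
    C = {G | ∃ F : Finset ℕ, isFacetOfS (coneZero I') F ∧ G = F.image σ}}

lemma pairSet_sort (i j : ℕ) (h : i + 1 < j) :
    (pairSet i j).sort (· ≤ ·) = [i, i + 1, j, j + 1] := by
  refine List.Perm.eq_of_pairwise' (r := (· ≤ ·)) ?_ ?_ ?_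
  rotate_right
  · apply List.perm_of_nodup_nodup_toFinset_eq (Finset.sort_nodup _ _)
    · simp [List.Nodup]; omega
    · rw [Finset.sort_toFinset]
      simp [pairSet]
  · exact Finset.pairwise_sort _ _
  · simp [List.pairwise_cons]; omega

lemma squeezedLE_pairSet {i j i' j' : ℕ} (hij : i + 1 < j) (hij' : i' + 1 < j')
    (h1 : i ≤ i') (h2 : j ≤ j') : squeezedLE (pairSet i j) (pairSet i' j') := by
  unfold squeezedLE
  rw [pairSet_sort _ _ hij, pairSet_sort _ _ hij']
  refine List.Forall₂.cons h1 (List.Forall₂.cons (by omega) (List.Forall₂.cons h2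
    (List.Forall₂.cons (by omega) List.Forall₂.nil)))

lemma pairSet_inj {i j i' j' : ℕ} (hij : i + 1 < j) (hij' : i' + 1 < j')
    (h : pairSet i j = pairSet i' j') : i = i' ∧ j = j' := by
  have := congrArg (fun s : Finset ℕ => s.sort (· ≤ ·)) h
  rw [pairSet_sort _ _ hij, pairSet_sort _ _ hij'] at this
  obtain ⟨h1,h2,h3,-⟩ := this
  omega

/-- the column function of an ideal -/
noncomputable def mseq (I : Set (Finset ℕ)) (j : ℕ) : ℕ :=
  sSup {i | 1 ≤ i ∧ i + 2 ≤ j ∧ pairSet i j ∈ I}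

lemma mseq_bdd (I : Set (Finset ℕ)) (j : ℕ) :
    BddAbove {i | 1 ≤ i ∧ i + 2 ≤ j ∧ pairSet i j ∈ I} :=
  ⟨j, fun i hi => by simp only [Set.mem_setOf_eq] at hi; omega⟩

lemma mseq_mem {I : Set (Finset ℕ)} {j : ℕ} (h : mseq I j ≠ 0) :
    1 ≤ mseq I j ∧ mseq I j + 2 ≤ j ∧ pairSet (mseq I j) j ∈ I := by
  have hne : {i | 1 ≤ i ∧ i + 2 ≤ j ∧ pairSet i j ∈ I}.Nonempty := by
    by_contra hc
    rw [Set.not_nonempty_iff_eq_empty] at hc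
    apply h
    unfold mseq
    rw [hc]
    exact csSup_empty
  exact Nat.sSup_mem hne (mseq_bdd I j)

lemma le_mseq {I : Set (Finset ℕ)} {i j : ℕ} (h1 : 1 ≤ i) (h2 : i + 2 ≤ j)
    (h3 : pairSet i j ∈ I) : i ≤ mseq I j :=
  le_csSup (mseq_bdd I j) ⟨h1, h2, h3⟩

/-- membership criterion -/
lemma mem_of_le_mseq {n : ℕ} {I : Set (Finset ℕ)} (hI : IsIdealF3 n I)
    {i j : ℕ} (h1 : 1 ≤ i) (h2 : i + 2 ≤ j) (hle : i ≤ mseq I j) :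
    pairSet i j ∈ I := by
  have hm : mseq I j ≠ 0 := by omega
  obtain ⟨hm1, hm2, hm3⟩ := mseq_mem hm
  have hjn : j + 1 ≤ n := by
    obtain ⟨a, b, ha, hab, hbn, heq⟩ := hI.1 _ hm3
    obtain ⟨-, h⟩ := pairSet_inj (by omega) (by omega) heq
    omega
  exact hI.2 _ _ ⟨i, j, h1, h2, hjn, rfl⟩ hm3
    (squeezedLE_pairSet (by omega) (by omega) hle le_rfl)

lemma mseq_col_le_n {n : ℕ} {I : Set (Finset ℕ)} (hI : IsIdealF3 n I)
    {j : ℕ} (h : mseq I j ≠ 0) : j + 1 ≤ n := by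
  obtain ⟨hm1, hm2, hm3⟩ := mseq_mem h
  obtain ⟨a, b, ha, hab, hbn, heq⟩ := hI.1 _ hm3
  obtain ⟨-, h⟩ := pairSet_inj (by omega) (by omega) heq
  omega

/-- an ideal is determined by its column function -/
lemma ideal_ext {n : ℕ} {I₁ I₂ : Set (Finset ℕ)} (h1 : IsIdealF3 n I₁)
    (h2 : IsIdealF3 n I₂) (h : mseq I₁ = mseq I₂) : I₁ = I₂ := by
  have key : ∀ (J₁ J₂ : Set (Finset ℕ)), IsIdealF3 n J₁ → IsIdealF3 n J₂ →
      mseq J₁ = mseq J₂ → J₁ ⊆ J₂ := by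
    intro J₁ J₂ hJ1 hJ2 hm f hf
    obtain ⟨a, b, ha, hab, hbn, heq⟩ := hJ1.1 _ hf
    subst heq
    have : a ≤ mseq J₂ b := by rw [← hm]; exact le_mseq ha hab hf
    exact mem_of_le_mseq hJ2 ha hab this
  exact Set.Subset.antisymm (key _ _ h1 h2 h) (key _ _ h2 h1 h.symm)

/-- abstract properties of the column function -/
def GoodSeq (n : ℕ) (m : ℕ → ℕ) : Prop :=
  (∀ j, m j ≠ 0 → 3 ≤ j ∧ j + 1 ≤ n ∧ m j + 2 ≤ j) ∧
  1 ≤ m (n - 1) ∧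
  (∀ j, min (m (j + 1)) (j - 2) ≤ m j)

lemma mseq_step {n : ℕ} {I : Set (Finset ℕ)} (hI : IsIdealF3 n I) (j : ℕ) :
    min (mseq I (j + 1)) (j - 2) ≤ mseq I j := by
  rcases Nat.eq_zero_or_pos (min (mseq I (j + 1)) (j - 2)) with h | h
  · omega
  have hv : mseq I (j+1) ≠ 0 := by omega
  obtain ⟨hm1, hm2, hm3⟩ := mseq_mem hv
  have hj : 3 ≤ j := by omega
  set i := min (mseq I (j+1)) (j - 2) with hi
  have hjn : j + 1 + 1 ≤ n := mseq_col_le_n hI hv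
  have hmem : pairSet i j ∈ I := by
    refine hI.2 _ _ ⟨i, j, by omega, by omega, by omega, rfl⟩ hm3 ?_
    exact squeezedLE_pairSet (by omega) (by omega) (by omega) (by omega)
  exact le_mseq (by omega) (by omega) hmem

lemma mseq_good {n : ℕ} {I : Set (Finset ℕ)} (hI : IsIdealF3 n I)
    (hn : 4 ≤ n) (hmax : maxVertex I = n) : GoodSeq n (mseq I) := by
  refine ⟨?_, ?_, fun j => mseq_step hI j⟩
  · intro j h
    obtain ⟨hm1, hm2, hm3⟩ := mseq_mem h
    have := mseq_col_le_n hI h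
    exact ⟨by omega, this, hm2⟩
  · -- max vertex n forces column n-1 to be nonempty
    have hU : (⋃ f ∈ I, (f : Set ℕ)) = {x | ∃ f ∈ I, x ∈ f} := by
      ext x; simp
    have hbdd : BddAbove (⋃ f ∈ I, (f : Set ℕ)) := by
      refine ⟨n, fun x hx => ?_⟩
      rw [hU] at hx
      obtain ⟨f, hf, hxf⟩ := hx
      obtain ⟨a, b, ha, hab, hbn, heq⟩ := hI.1 _ hf
      subst heq
      have : x = a ∨ x = a + 1 ∨ x = b ∨ x = b + 1 := by
        simpa [pairSet] using hxf
      omega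
    have hne : (⋃ f ∈ I, (f : Set ℕ)).Nonempty := by
      by_contra hc
      rw [Set.not_nonempty_iff_eq_empty] at hc
      unfold maxVertex at hmax
      rw [hc] at hmax
      simp [csSup_empty] at hmax
      omega
    have hmem := Nat.sSup_mem hne hbdd
    unfold maxVertex at hmax
    rw [hmax, hU] at hmem
    obtain ⟨f, hf, hxf⟩ := hmem
    obtain ⟨a, b, ha, hab, hbn, heq⟩ := hI.1 _ hf
    subst heq
    have : n = a ∨ n = a + 1 ∨ n = b ∨ n = b + 1 := by
      simpa [pairSet] using hxf
    have hb : b = n - 1 := by omega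
    have : a ≤ mseq I (n - 1) := by
      apply le_mseq ha (by omega)
      rwa [← hb]
    omega

section Counting

variable {n : ℕ} {m : ℕ → ℕ}

lemma good_pos (h : GoodSeq n m) (hn : 4 ≤ n) :
    ∀ j, 3 ≤ j → j + 1 ≤ n → 1 ≤ m j := by
  have key : ∀ k, k + 4 ≤ n → 1 ≤ m (n - 1 - k) := by
    intro k
    induction k with
    | zero => intro _; simpa using h.2.1
    | succ k ih =>
      intro hk
      have h1 := h.2.2 (n - 1 - (k + 1))
      have e : n - 1 - (k + 1) + 1 = n - 1 - k := by omega
      rw [e] at h1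
      have h2 := ih (by omega)
      omega
  intro j h3 hjn
  have h2 := key (n - 1 - j) (by omega)
  rwa [show n - 1 - (n - 1 - j) = j from by omega] at h2

lemma good_three (h : GoodSeq n m) (hn : 4 ≤ n) : m 3 = 1 := by
  have h1 := good_pos h hn 3 (by omega) (by omega)
  have h2 := h.1 3 (by omega)
  omega

/-- largest "full" column -/
noncomputable def pOf (n : ℕ) (m : ℕ → ℕ) : ℕ :=
  sSup {j | 3 ≤ j ∧ j + 1 ≤ n ∧ m j = j - 2}

lemma pOf_mem (h : GoodSeq n m) (hn : 4 ≤ n) :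
    3 ≤ pOf n m ∧ pOf n m + 1 ≤ n ∧ m (pOf n m) = pOf n m - 2 := by
  have hne : {j | 3 ≤ j ∧ j + 1 ≤ n ∧ m j = j - 2}.Nonempty :=
    ⟨3, ⟨le_rfl, by omega, by rw [good_three h hn]⟩⟩
  have hbdd : BddAbove {j | 3 ≤ j ∧ j + 1 ≤ n ∧ m j = j - 2} :=
    ⟨n, fun j hj => by simp only [Set.mem_setOf_eq] at hj; omega⟩
  exact Nat.sSup_mem hne hbdd

lemma le_pOf (h : GoodSeq n m) {j : ℕ} (h3 : 3 ≤ j) (hjn : j + 1 ≤ n)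
    (hfull : m j = j - 2) : j ≤ pOf n m := by
  refine le_csSup ⟨n, fun i hi => by simp only [Set.mem_setOf_eq] at hi; omega⟩ ?_
  exact ⟨h3, hjn, hfull⟩

lemma good_full_below (h : GoodSeq n m) (hn : 4 ≤ n) :
    ∀ j, 3 ≤ j → j ≤ pOf n m → m j = j - 2 := by
  obtain ⟨hp3, hpn, hpfull⟩ := pOf_mem h hn
  have key : ∀ k, k + 3 ≤ pOf n m → m (pOf n m - k) = pOf n m - k - 2 := by
    intro k
    induction k with
    | zero => intro _; simpa using hpfull
    | succ k ih =>
      intro hk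
      have h1 := h.2.2 (pOf n m - (k + 1))
      have e : pOf n m - (k + 1) + 1 = pOf n m - k := by omega
      rw [e] at h1
      have h2 := ih (by omega)
      have hne : m (pOf n m - (k + 1)) ≠ 0 := by omega
      have h4 := h.1 _ hne
      omega
  intro j h3 hjp
  have h2 := key (pOf n m - j) (by omega)
  rwa [show pOf n m - (pOf n m - j) = j from by omega] at h2

lemma good_above (h : GoodSeq n m) (hn : 4 ≤ n) {j : ℕ}
    (hpj : pOf n m < j) (hjn : j + 1 ≤ n) : 1 ≤ m j ∧ m j + 3 ≤ j := by
  have hp3 := (pOf_mem h hn).1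
  have h1 := good_pos h hn j (by omega) hjn
  have h2 := (h.1 j (by omega)).2.2
  have h3 : m j ≠ j - 2 := fun hfull => by
    have := le_pOf h (by omega) hjn hfull
    omega
  omega

lemma good_tail_anti (h : GoodSeq n m) (hn : 4 ≤ n) {j : ℕ}
    (hpj : pOf n m < j) (hjn : j + 2 ≤ n) : m (j + 1) ≤ m j := by
  have h1 := h.2.2 j
  have h2 := good_above h hn (show pOf n m < j + 1 by omega) (by omega)
  omega

/-- the encoding function -/
def psiOf (n : ℕ) (m : ℕ → ℕ) (j : ℕ) : ℕ := m j + (n - 1 - j)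

lemma psi_lt (h : GoodSeq n m) (hn : 4 ≤ n) :
    ∀ j j', pOf n m < j → j < j' → j' + 1 ≤ n → psiOf n m j' < psiOf n m j := by
  intro j j' hpj hjj'
  induction j' with
  | zero => omega
  | succ j' ih =>
    intro hj'n
    rcases Nat.lt_or_ge j j' with hlt | hge
    · have h1 := ih (by omega) (by omega)
      have h2 := good_tail_anti h hn (show pOf n m < j' by omega) (by omega)
      unfold psiOf at *
      omega
    · have hj : j = j' := by omega
      subst hj
      have h2 := good_tail_anti h hn hpj (by omega)
      unfold psiOf
      omega

lemma psi_injOn (h : GoodSeq n m) (hn : 4 ≤ n) :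
    Set.InjOn (psiOf n m) (Finset.Ioc (pOf n m) (n - 1)) := by
  intro a ha b hb hab
  simp only [Finset.coe_Ioc, Set.mem_Ioc] at ha hb
  rcases lt_trichotomy a b with hlt | heq | hgt
  · have := psi_lt h hn a b ha.1 hlt (by omega); omega
  · exact heq
  · have := psi_lt h hn b a hb.1 hgt (by omega); omega

/-- the encoding Finset -/
noncomputable def phiOf (n : ℕ) (m : ℕ → ℕ) : Finset ℕ :=
  (Finset.Ioc (pOf n m) (n - 1)).image (psiOf n m)

lemma phi_card (h : GoodSeq n m) (hn : 4 ≤ n) :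
    (phiOf n m).card = n - 1 - pOf n m := by
  unfold phiOf
  rw [Finset.card_image_of_injOn (by simpa using psi_injOn h hn), Nat.card_Ioc]

lemma phi_subset (h : GoodSeq n m) (hn : 4 ≤ n) :
    phiOf n m ⊆ Finset.Icc 1 (n - 4) := by
  intro x hx
  simp only [phiOf, Finset.mem_image, Finset.mem_Ioc] at hx
  obtain ⟨j, ⟨hpj, hjn⟩, rfl⟩ := hx
  have h1 := good_above h hn hpj (by omega)
  simp only [psiOf, Finset.mem_Icc]
  omega

lemma phi_rank (h : GoodSeq n m) (hn : 4 ≤ n) {j : ℕ}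
    (hpj : pOf n m < j) (hjn : j ≤ n - 1) :
    ((phiOf n m).filter (· < psiOf n m j)).card = n - 1 - j := by
  have hset : (phiOf n m).filter (· < psiOf n m j)
      = (Finset.Ioc j (n - 1)).image (psiOf n m) := by
    ext x
    simp only [Finset.mem_filter, phiOf, Finset.mem_image, Finset.mem_Ioc]
    constructor
    · rintro ⟨⟨j', ⟨hpj', hj'n⟩, rfl⟩, hlt⟩
      refine ⟨j', ⟨?_, hj'n⟩, rfl⟩
      rcases lt_trichotomy j j' with h1 | h1 | h1
      · exact h1
      · subst h1; omega
      · have := psi_lt h hn j' j hpj' h1 (by omega); omega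
    · rintro ⟨j', ⟨hjj', hj'n⟩, rfl⟩
      exact ⟨⟨j', ⟨by omega, hj'n⟩, rfl⟩, psi_lt h hn j j' hpj hjj' (by omega)⟩
  rw [hset, Finset.card_image_of_injOn, Nat.card_Ioc]
  exact (psi_injOn h hn).mono (by intro x hx; simp at hx ⊢; omega)

lemma rank_injective {s : Finset ℕ} {x y : ℕ} (hx : x ∈ s) (hy : y ∈ s)
    (hr : (s.filter (· < x)).card = (s.filter (· < y)).card) : x = y := by
  have key : ∀ a b : ℕ, a ∈ s → b ∈ s → a < b →
      (s.filter (· < a)).card < (s.filter (· < b)).card := by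
    intro a b ha hb hab
    apply Finset.card_lt_card
    constructor
    · intro z hz
      simp only [Finset.mem_filter] at hz ⊢
      exact ⟨hz.1, by omega⟩
    · intro hsub
      have : a ∈ s.filter (· < b) := Finset.mem_filter.2 ⟨ha, by simpa⟩
      have := hsub this
      simp at this
  rcases lt_trichotomy x y with h1 | h1 | h1
  · have := key x y hx hy h1; omega
  · exact h1
  · have := key y x hy hx h1; omega

/-- the full injectivity of the encoding -/
lemma phi_inj {m₁ m₂ : ℕ → ℕ} (h1 : GoodSeq n m₁) (h2 : GoodSeq n m₂)
    (hn : 4 ≤ n) (hphi : phiOf n m₁ = phiOf n m₂) : m₁ = m₂ := by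
  have hp : pOf n m₁ = pOf n m₂ := by
    have c1 := phi_card h1 hn
    have c2 := phi_card h2 hn
    have hp1 := (pOf_mem h1 hn).2.1
    have hp2 := (pOf_mem h2 hn).2.1
    rw [hphi] at c1
    omega
  funext j
  by_cases hj : 3 ≤ j ∧ j + 1 ≤ n
  · rcases le_or_gt j (pOf n m₁) with hle | hgt
    · rw [good_full_below h1 hn j hj.1 hle,
        good_full_below h2 hn j hj.1 (hp ▸ hle)]
    · have e1 : psiOf n m₁ j ∈ phiOf n m₂ := by
        rw [← hphi]
        simp only [phiOf, Finset.mem_image, Finset.mem_Ioc]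
        exact ⟨j, ⟨hgt, by omega⟩, rfl⟩
      have e2 : psiOf n m₂ j ∈ phiOf n m₂ := by
        simp only [phiOf, Finset.mem_image, Finset.mem_Ioc]
        exact ⟨j, ⟨hp ▸ hgt, by omega⟩, rfl⟩
      have r1 := phi_rank h1 hn hgt (by omega)
      have r2 := phi_rank h2 hn (hp ▸ hgt) (by omega : j ≤ n - 1)
      rw [hphi] at r1
      have := rank_injective e1 e2 (by rw [r1, r2])
      unfold psiOf at this
      omega
  · have z1 : m₁ j = 0 := by
      by_contra hc
      have := h1.1 j hc
      omega
    have z2 : m₂ j = 0 := by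
      by_contra hc
      have := h2.1 j hc
      omega
    rw [z1, z2]

end Counting

lemma facet_le {n : ℕ} {I' : Set (Finset ℕ)} (hI : IsIdealF3 n I')
    {F : Finset ℕ} (hF : isFacetOfS (coneZero I') F) : ∀ x ∈ F, x ≤ n := by
  obtain ⟨-, g, ⟨⟨f, hf, rfl⟩, hsub⟩, -⟩ := hF
  intro x hx
  obtain ⟨a, b, ha, hab, hbn, rfl⟩ := hI.1 _ hf
  have := hsub hx
  simp [pairSet] at this
  rcases this with h | h | h | h | h <;> omega

theorem count_labeled_squeezed_spheres (n : ℕ) (hn : 4 ≤ n) :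
    (labeledSqueezedSpheres n).Finite ∧
    (labeledSqueezedSpheres n).ncard ≤ 2 ^ (n - 4) * Nat.factorial (n + 1) := by
  classical
  have hchoice : ∀ C ∈ labeledSqueezedSpheres n,
      ∃ q : Set (Finset ℕ) × Equiv.Perm ℕ,
        IsIdealF3 n q.1 ∧ maxVertex q.1 = n ∧ (∀ x : ℕ, x ≤ n → q.2 x ≤ n) ∧
        C = {G | ∃ F : Finset ℕ, isFacetOfS (coneZero q.1) F ∧ G = F.image q.2} := by
    rintro C ⟨I', σ, h1, h2, h3, h4⟩
    exact ⟨(I', σ), h1, h2, h3, h4⟩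
  set wit : Set (Finset ℕ) → Set (Finset ℕ) × Equiv.Perm ℕ := fun C =>
    if h : C ∈ labeledSqueezedSpheres n then (hchoice C h).choose
    else (∅, Equiv.refl ℕ) with hwit
  have hwit_spec : ∀ C, C ∈ labeledSqueezedSpheres n →
      IsIdealF3 n (wit C).1 ∧ maxVertex (wit C).1 = n ∧
      (∀ x : ℕ, x ≤ n → (wit C).2 x ≤ n) ∧
      C = {G | ∃ F : Finset ℕ, isFacetOfS (coneZero (wit C).1) F ∧
        G = F.image (wit C).2} := by
    intro C h
    simp only [hwit, dif_pos h]
    exact (hchoice C h).choose_spec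
  set emb : Set (Finset ℕ) → (Fin (n + 1) ↪ Fin (n + 1)) := fun C =>
    if h : ∀ x : ℕ, x ≤ n → (wit C).2 x ≤ n then
      ⟨fun x => ⟨(wit C).2 x, Nat.lt_succ_of_le (h x (Nat.lt_succ_iff.mp x.isLt))⟩,
       fun a b hab => Fin.ext ((wit C).2.injective (congrArg Fin.val hab))⟩
    else Function.Embedding.refl _ with hemb
  set f : Set (Finset ℕ) → Finset ℕ × (Fin (n + 1) ↪ Fin (n + 1)) := fun C =>
    (phiOf n (mseq (wit C).1), emb C) with hf
  set T : Finset (Finset ℕ × (Fin (n + 1) ↪ Fin (n + 1))) :=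
    (Finset.Icc 1 (n - 4)).powerset ×ˢ Finset.univ with hT
  have hmaps : ∀ C ∈ labeledSqueezedSpheres n, f C ∈ (↑T : Set _) := by
    intro C hC
    obtain ⟨hI, hmax, hσ, hCeq⟩ := hwit_spec C hC
    have hgood := mseq_good hI hn hmax
    simp only [hf, hT, Finset.mem_coe, Finset.mem_product]
    exact ⟨Finset.mem_powerset.2 (phi_subset hgood hn), Finset.mem_univ _⟩
  have hinj : Set.InjOn f (labeledSqueezedSpheres n) := by
    intro C₁ h₁ C₂ h₂ heq
    obtain ⟨hI₁, hmax₁, hσ₁, hCeq₁⟩ := hwit_spec C₁ h₁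
    obtain ⟨hI₂, hmax₂, hσ₂, hCeq₂⟩ := hwit_spec C₂ h₂
    have heq1 : phiOf n (mseq (wit C₁).1) = phiOf n (mseq (wit C₂).1) :=
      congrArg Prod.fst heq
    have heq2 : emb C₁ = emb C₂ := congrArg Prod.snd heq
    have hIeq : (wit C₁).1 = (wit C₂).1 := by
      apply ideal_ext hI₁ hI₂
      exact phi_inj (mseq_good hI₁ hn hmax₁) (mseq_good hI₂ hn hmax₂) hn heq1
    have hσeq : ∀ x : ℕ, x ≤ n → (wit C₁).2 x = (wit C₂).2 x := by
      intro x hx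
      rw [hemb] at heq2
      simp only [dif_pos hσ₁, dif_pos hσ₂] at heq2
      have := congrArg (fun e : Fin (n + 1) ↪ Fin (n + 1) =>
        (e ⟨x, Nat.lt_succ_of_le hx⟩ : Fin (n + 1)).val) heq2
      exact this
    rw [hCeq₁, hCeq₂, hIeq]
    have himg : ∀ F : Finset ℕ, isFacetOfS (coneZero (wit C₂).1) F →
        F.image (wit C₁).2 = F.image (wit C₂).2 := by
      intro F hF
      apply Finset.image_congr
      intro x hx
      exact hσeq x (facet_le hI₂ hF x hx)
    ext G
    constructor
    · rintro ⟨F, hF, rfl⟩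
      exact ⟨F, hF, himg F hF⟩
    · rintro ⟨F, hF, rfl⟩
      exact ⟨F, hF, (himg F hF).symm⟩
  have himage : f '' labeledSqueezedSpheres n ⊆ (↑T : Set _) := by
    rintro y ⟨C, hC, rfl⟩
    exact hmaps C hC
  have hfinT : (↑T : Set (Finset ℕ × (Fin (n + 1) ↪ Fin (n + 1)))).Finite :=
    T.finite_toSet
  have hfin : (labeledSqueezedSpheres n).Finite :=
    Set.Finite.of_finite_image (hfinT.subset himage) hinj
  refine ⟨hfin, ?_⟩
  calc (labeledSqueezedSpheres n).ncard
      ≤ (↑T : Set (Finset ℕ × (Fin (n + 1) ↪ Fin (n + 1)))).ncard :=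
        Set.ncard_le_ncard_of_injOn f hmaps hinj hfinT
    _ = T.card := Set.ncard_coe_finset T
    _ = 2 ^ (n - 4) * Nat.factorial (n + 1) := by
        rw [hT, Finset.card_product, Finset.card_powerset, Nat.card_Icc,
          Finset.card_univ, Fintype.card_embedding_eq, Fintype.card_fin,
          Nat.descFactorial_self]
        rw [show n - 4 + 1 - 1 = n - 4 from by omega]
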